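/- The class group of A (the group of invertible fractional ideals of A modulo principal fractional ideals) is torsion-free: if c is a class in the class group of A, n ≥ 1 is an integer, and n • c = 0, then c = 0. -/

import Mathlib

set_option synthInstance.maxHeartbeats 1000000
set_option maxHeartbeats 1000000

open scoped nonZeroDivisors

/-- Over an integrally closed domain, the group of fractional ideals is torsion-free. -/
theorem fractionalIdeal_pow_eq_one_aux {R : Type*} [CommRing R] [IsDomain R]
    [IsIntegrallyClosed R] {K : Type*} [Field K] [Algebra R K] [IsFractionRing R K]
    (I : FractionalIdeal R⁰ K) (n : ℕ) (hn : 1 ≤ n) (h : I ^ n = 1) : I = 1 := by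
  have key : ∀ J : FractionalIdeal R⁰ K, J ^ n = 1 → J ≤ 1 := by
    intro J hJ x hx
    have hx' : x ∈ (J : Submodule R K) := hx
    have hxn : x ^ n ∈ (J : Submodule R K) ^ n := Submodule.pow_mem_pow _ hx' n
    rw [← FractionalIdeal.coe_pow, hJ] at hxn
    obtain ⟨y, hy⟩ := (FractionalIdeal.mem_one_iff R⁰).mp hxn
    have hint : IsIntegral R x := by
      refine IsIntegral.of_pow (lt_of_lt_of_le one_pos hn) ?_
      rw [← hy]
      exact isIntegral_algebraMap
    obtain ⟨z, hz⟩ := IsIntegrallyClosed.isIntegral_iff.mp hint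
    exact (FractionalIdeal.mem_one_iff R⁰).mpr ⟨z, hz⟩
  have h1 : I ≤ 1 := key I h
  have h2 : I ^ (n - 1) ≤ 1 := by
    refine key _ ?_
    rw [← pow_mul, mul_comm, pow_mul, h, one_pow]
  refine le_antisymm h1 ?_
  calc (1 : FractionalIdeal R⁰ K) = I ^ n := h.symm
    _ = I * I ^ (n - 1) := by rw [← pow_succ', Nat.sub_add_cancel hn]
    _ ≤ I * 1 := mul_le_mul_right h2 I
    _ = I := mul_one I

/-- Let `A` be the integral closure of `k[t]` in an algebraic closure `Ω` of
`k(t)`, `k` algebraically closed.  The class group of `A` is torsion-free: if `n ≥ 1` and the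
`n`-th multiple of a class is trivial (multiplicatively: `c ^ n = 1`), then the class is
trivial. -/
theorem classGroup_torsionFree
    (k : Type*) [Field k] [IsAlgClosed k]
    (Ω : Type*) [Field Ω] [Algebra (Polynomial k) Ω] [Algebra (RatFunc k) Ω]
    [IsScalarTower (Polynomial k) (RatFunc k) Ω] [IsAlgClosure (RatFunc k) Ω]
    (c : ClassGroup (integralClosure (Polynomial k) Ω)) (n : ℕ) (hn : 1 ≤ n)
    (hc : c ^ n = 1) :
    c = 1 := by
  set A := integralClosure (Polynomial k) Ω with hA
  -- Ω is algebraic over k[t]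
  haveI : Algebra.IsAlgebraic (RatFunc k) Ω := IsAlgClosure.isAlgebraic
  haveI halg : Algebra.IsAlgebraic (Polynomial k) Ω :=
    (IsFractionRing.comap_isAlgebraic_iff (K := RatFunc k)).mpr inferInstance
  have hinj : ∀ x : Polynomial k, algebraMap (Polynomial k) Ω x = 0 → x = 0 := by
    intro x hx
    have : algebraMap (RatFunc k) Ω (algebraMap (Polynomial k) (RatFunc k) x) = 0 := by
      rw [← IsScalarTower.algebraMap_apply]; exact hx
    have := (map_eq_zero (algebraMap (RatFunc k) Ω)).mp this
    exact IsFractionRing.to_map_eq_zero_iff.mp this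
  -- A has fraction field Ω
  haveI hfr : IsFractionRing A Ω := integralClosure.isFractionRing_of_algebraic hinj
  -- A is integrally closed
  haveI hic : IsIntegrallyClosed A :=
    (IsIntegrallyClosed.integralClosure_eq_bot_iff Ω).mp integralClosure_idem
  -- Ω is algebraically closed
  haveI : IsAlgClosed Ω := IsAlgClosure.isAlgClosed (RatFunc k)
  -- induct on the class
  revert hc
  refine ClassGroup.induction (R := A) Ω (fun I => ?_) c
  intro hc
  rw [← map_pow] at hc
  obtain ⟨x, hx⟩ := (ClassGroup.mk_eq_one_iff.mp hc).principal
  have hIn : ((I : FractionalIdeal A⁰ Ω)) ^ n = FractionalIdeal.spanSingleton A⁰ x := by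
    rw [← Units.val_pow_eq_pow_val]
    exact Subtype.coe_injective (hx.trans (FractionalIdeal.coe_spanSingleton _ _).symm)
  have hxne : x ≠ 0 := by
    intro h0
    apply Units.ne_zero (I ^ n)
    rw [Units.val_pow_eq_pow_val, hIn, h0, FractionalIdeal.spanSingleton_zero]
  obtain ⟨y, hy⟩ := IsAlgClosed.exists_pow_nat_eq x (lt_of_lt_of_le one_pos hn)
  have hyne : y ≠ 0 := by
    rintro rfl
    exact hxne (by rw [← hy, zero_pow (Nat.one_le_iff_ne_zero.mp hn)])
  -- J = I * (y)⁻¹ satisfies J^n = 1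
  have hJ : ((I : FractionalIdeal A⁰ Ω) * FractionalIdeal.spanSingleton A⁰ y⁻¹) ^ n = 1 := by
    rw [mul_pow, hIn, FractionalIdeal.spanSingleton_pow, ← hy, inv_pow,
      FractionalIdeal.spanSingleton_mul_spanSingleton, mul_inv_cancel₀ (pow_ne_zero n hyne),
      FractionalIdeal.spanSingleton_one]
  have hJ1 := fractionalIdeal_pow_eq_one_aux _ n hn hJ
  -- hence I = spanSingleton y
  have hIy : (I : FractionalIdeal A⁰ Ω) = FractionalIdeal.spanSingleton A⁰ y := by
    have := congrArg (· * FractionalIdeal.spanSingleton A⁰ y) hJ1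
    simpa [mul_assoc, FractionalIdeal.spanSingleton_mul_spanSingleton,
      inv_mul_cancel₀ hyne, FractionalIdeal.spanSingleton_one] using this
  rw [ClassGroup.mk_eq_one_iff]
  refine ⟨⟨y, ?_⟩⟩
  rw [hIy]
  exact FractionalIdeal.coe_spanSingleton _ _
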